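/- arXiv:0903.3736 — 6 statements merged into one kernel-verified Lean document; each statement's English description precedes it below -/
import Mathlib

section
/- If f, g are nonnegative random variables with rel(f|g) ≤ 0 and rel(g|f) ≤ 0, then f = g almost surely. -/
open MeasureTheory
open scoped ENNReal

/-- Division of nonnegative reals with the conventions `x / 0 = ∞` for `x > 0`
and `0 / 0 = 1`, valued in `ℝ≥0∞`. -/
noncomputable def qdiv (x y : ℝ) : ℝ≥0∞ :=
  if x = 0 ∧ y = 0 then 1 else if y = 0 then ⊤ else ENNReal.ofReal (x / y)

lemma qdiv_meas {Ω : Type*} [MeasurableSpace Ω] {f g : Ω → ℝ}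
    (hf : Measurable f) (hg : Measurable g) :
    Measurable fun ω => qdiv (f ω) (g ω) := by
  unfold qdiv
  have h1 : MeasurableSet {ω | f ω = 0 ∧ g ω = 0} :=
    (hf (measurableSet_singleton 0)).inter (hg (measurableSet_singleton 0))
  have h2 : MeasurableSet {ω | g ω = 0} := hg (measurableSet_singleton 0)
  exact Measurable.ite h1 measurable_const
    (Measurable.ite h2 measurable_const (hf.div hg).ennreal_ofReal)

lemma qdiv_add_ge (x y : ℝ) (hx : 0 ≤ x) (hy : 0 ≤ y) :
    (2 : ℝ≥0∞) ≤ qdiv x y + qdiv y x := by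
  unfold qdiv
  rcases eq_or_lt_of_le hx with hx0 | hx0 <;> rcases eq_or_lt_of_le hy with hy0 | hy0
  · simp [← hx0, ← hy0]; norm_num
  · simp [← hx0, hy0.ne', hx0.symm]
  · simp [← hy0, hx0.ne', hy0.symm]
  · simp only [hx0.ne', hy0.ne', and_false, false_and, if_false]
    rw [← ENNReal.ofReal_add (by positivity) (by positivity)]
    have h : (2 : ℝ) ≤ x / y + y / x := by
      rw [div_add_div _ _ hy0.ne' hx0.ne', le_div_iff₀ (by positivity)]
      nlinarith [sq_nonneg (x - y)]
    calc (2 : ℝ≥0∞) = ENNReal.ofReal 2 := by norm_num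
    _ ≤ _ := ENNReal.ofReal_le_ofReal h

lemma qdiv_add_eq (x y : ℝ) (hx : 0 ≤ x) (hy : 0 ≤ y)
    (h : qdiv x y + qdiv y x = 2) : x = y := by
  unfold qdiv at h
  rcases eq_or_lt_of_le hx with hx0 | hx0 <;> rcases eq_or_lt_of_le hy with hy0 | hy0
  · rw [← hx0, ← hy0]
  · simp [← hx0, hy0.ne', hx0.symm] at h
  · simp [← hy0, hx0.ne', hy0.symm] at h
  · simp only [hx0.ne', hy0.ne', and_false, false_and, if_false] at h
    rw [← ENNReal.ofReal_add (by positivity) (by positivity)] at h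
    have h2 : ENNReal.ofReal (x / y + y / x) = ENNReal.ofReal 2 := by rw [h]; norm_num
    have h3 : x / y + y / x = 2 :=
      (ENNReal.ofReal_eq_ofReal_iff (by positivity) (by norm_num)).1 h2
    have h4 : x * x + y * y = 2 * (x * y) := by
      field_simp at h3
      nlinarith [h3]
    nlinarith [sq_nonneg (x - y)]

/-- If `rel(f|g) ≤ 0` and `rel(g|f) ≤ 0`, i.e. `E[f/g] ≤ 1` and `E[g/f] ≤ 1`,
then `f = g` almost surely. -/
theorem stmt1 {Ω : Type*} [MeasurableSpace Ω] (P : Measure Ω) [IsProbabilityMeasure P]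
    (f g : Ω → ℝ) (hf : Measurable f) (hg : Measurable g)
    (hf0 : ∀ ω, 0 ≤ f ω) (hg0 : ∀ ω, 0 ≤ g ω)
    (hfg : ∫⁻ ω, qdiv (f ω) (g ω) ∂P ≤ 1)
    (hgf : ∫⁻ ω, qdiv (g ω) (f ω) ∂P ≤ 1) :
    f =ᵐ[P] g := by
  set h : Ω → ℝ≥0∞ := fun ω => qdiv (f ω) (g ω) + qdiv (g ω) (f ω) with hh
  have hmeas : Measurable h := (qdiv_meas hf hg).add (qdiv_meas hg hf)
  have hle : (fun _ : Ω => (2 : ℝ≥0∞)) ≤ᵐ[P] h :=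
    Filter.Eventually.of_forall fun ω => qdiv_add_ge _ _ (hf0 ω) (hg0 ω)
  have hconst : ∫⁻ _, (2 : ℝ≥0∞) ∂P = 2 := by simp
  have hint : ∫⁻ ω, h ω ∂P ≤ 2 := by
    rw [hh]
    rw [lintegral_add_left (qdiv_meas hf hg)]
    calc _ ≤ (1 : ℝ≥0∞) + 1 := add_le_add hfg hgf
    _ = 2 := by norm_num
  have key : (fun _ : Ω => (2 : ℝ≥0∞)) =ᵐ[P] h := by
    refine ae_eq_of_ae_le_of_lintegral_le hle ?_ hmeas.aemeasurable ?_
    · rw [hconst]; norm_num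
    · rw [hconst]; exact hint
  filter_upwards [key] with ω hω
  exact qdiv_add_eq _ _ (hf0 ω) (hg0 ω) hω.symm
end

section
/- Failure of transitivity: there exist a probability space and nonnegative random variables f, g, h such that rel(f|g) ≤ 0 and rel(g|h) ≤ 0 but rel(f|h) > 0. Concretely, on a two-point space with P[A] = p ∈ (0,1), take f = (1/p)·1_A, g = 1, h = (2p/(1+p))·1_A + 2·1_{Aᶜ}; then rel(f|g) = 0, rel(g|h) = 0, and rel(f|h) = (1-p)/(2p) > 0. -/
open MeasureTheory
open scoped ENNReal Classical

lemma lint_if {Ω : Type*} [MeasurableSpace Ω] (P : Measure Ω)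
    {A : Set Ω} (hA : MeasurableSet A) (c₁ c₂ : ℝ≥0∞) :
    ∫⁻ ω, (if ω ∈ A then c₁ else c₂) ∂P = c₁ * P A + c₂ * P Aᶜ := by
  rw [← lintegral_add_compl (μ := P) _ hA]
  rw [setLIntegral_congr_fun hA (fun ω hω => if_pos hω),
    setLIntegral_congr_fun hA.compl (fun ω hω => if_neg hω),
    setLIntegral_const, setLIntegral_const]

/-- Failure of transitivity: with `P[A] = p ∈ (0,1)`, `f = (1/p)·1_A`, `g = 1`,
`h = (2p/(1+p))·1_A + 2·1_{Aᶜ}`, one has `rel(f|g) = 0`, `rel(g|h) = 0`, and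
`rel(f|h) = (1-p)/(2p) > 0`. -/
theorem stmt6 {Ω : Type*} [MeasurableSpace Ω] (P : Measure Ω) [IsProbabilityMeasure P]
    (A : Set Ω) (hA : MeasurableSet A)
    (p : ℝ) (hp0 : 0 < p) (hp1 : p < 1) (hPA : P A = ENNReal.ofReal p)
    (f g h : Ω → ℝ)
    (hf : f = fun ω => if ω ∈ A then 1 / p else 0)
    (hg : g = fun _ => 1)
    (hh : h = fun ω => if ω ∈ A then 2 * p / (1 + p) else 2) :
    (∫⁻ ω, qdiv (f ω) (g ω) ∂P = 1) ∧
    (∫⁻ ω, qdiv (g ω) (h ω) ∂P = 1) ∧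
    (∫⁻ ω, qdiv (f ω) (h ω) ∂P = 1 + ENNReal.ofReal ((1 - p) / (2 * p))) ∧
    (1 < ∫⁻ ω, qdiv (f ω) (h ω) ∂P) := by
  subst hf hg hh
  have hp0' : (0:ℝ) < 1 + p := by linarith
  have hPAc : P Aᶜ = ENNReal.ofReal (1 - p) := by
    rw [prob_compl_eq_one_sub hA, hPA, ← ENNReal.ofReal_one,
      ← ENNReal.ofReal_sub _ hp0.le]
  have h1 : ∫⁻ ω, qdiv (if ω ∈ A then 1 / p else 0) 1 ∂P = 1 := by
    have : ∀ ω, qdiv (if ω ∈ A then 1 / p else 0) 1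
        = if ω ∈ A then ENNReal.ofReal (1/p) else 0 := by
      intro ω
      by_cases hω : ω ∈ A <;> simp [hω, qdiv]
    simp only [this]
    rw [lint_if P hA, hPA, hPAc, zero_mul, add_zero,
      ← ENNReal.ofReal_mul (by positivity)]
    rw [one_div, inv_mul_cancel₀ hp0.ne', ENNReal.ofReal_one]
  have h2 : ∫⁻ ω, qdiv 1 (if ω ∈ A then 2 * p / (1 + p) else 2) ∂P = 1 := by
    have hne : 2 * p / (1 + p) ≠ 0 := by positivity
    have : ∀ ω, qdiv 1 (if ω ∈ A then 2 * p / (1 + p) else 2)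
        = if ω ∈ A then ENNReal.ofReal ((1+p)/(2*p)) else ENNReal.ofReal (1/2) := by
      intro ω
      by_cases hω : ω ∈ A <;> simp [hω, qdiv, hne, one_div_div]
    simp only [this]
    rw [lint_if P hA, hPA, hPAc,
      ← ENNReal.ofReal_mul (by positivity), ← ENNReal.ofReal_mul (by positivity),
      ← ENNReal.ofReal_add (by positivity) (by nlinarith)]
    rw [show (1+p)/(2*p)*p + 1/2*(1-p) = 1 by field_simp; ring, ENNReal.ofReal_one]
  have h3 : ∫⁻ ω, qdiv (if ω ∈ A then 1 / p else 0)
      (if ω ∈ A then 2 * p / (1 + p) else 2) ∂P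
      = 1 + ENNReal.ofReal ((1 - p) / (2 * p)) := by
    have hne : 2 * p / (1 + p) ≠ 0 := by positivity
    have hne2 : (1:ℝ)/p ≠ 0 := by positivity
    have : ∀ ω, qdiv (if ω ∈ A then 1 / p else 0)
        (if ω ∈ A then 2 * p / (1 + p) else 2)
        = if ω ∈ A then ENNReal.ofReal ((1+p)/(2*p^2)) else 0 := by
      intro ω
      by_cases hω : ω ∈ A <;> simp [hω, qdiv, hne, hne2]
      congr 1
      rw [div_div_eq_mul_div, inv_mul_eq_div, div_div]
      congr 1
      ring
    simp only [this]
    rw [lint_if P hA, hPA, hPAc, zero_mul, add_zero,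
      ← ENNReal.ofReal_mul (by positivity)]
    rw [← ENNReal.ofReal_one, ← ENNReal.ofReal_add (by norm_num) (div_nonneg (by linarith) (by linarith)),
      show (1+p)/(2*p^2)*p = 1 + (1-p)/(2*p) by field_simp; ring]
  refine ⟨h1, h2, h3, ?_⟩
  rw [h3]
  have : (0:ℝ≥0∞) < ENNReal.ofReal ((1 - p) / (2 * p)) := by
    rw [ENNReal.ofReal_pos]; exact div_pos (by linarith) (by linarith)
  exact ENNReal.lt_add_right ENNReal.one_ne_top this.ne'
end

section
/- Weak chain property: let f_0, ..., f_n be strictly positive random variables with f_0 = f_n, and suppose E[f_{i-1}/f_i] ≤ 1 for each i ∈ {1,...,n}. Then f_i = f_0 almost surely for all i ∈ {1,...,n}. -/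
open MeasureTheory
open scoped ENNReal

/-- Weak chain property: if `f 0, …, f n` are strictly positive random variables with
`f 0 = f n` a.s. and `E[f (i-1) / f i] ≤ 1` for each `i ∈ {1, …, n}`, then
`f i = f 0` a.s. for all `i ≤ n`. -/
theorem stmt7 {Ω : Type*} [MeasurableSpace Ω] (P : Measure Ω) [IsProbabilityMeasure P]
    (n : ℕ) (f : ℕ → Ω → ℝ)
    (hmeas : ∀ i ≤ n, Measurable (f i))
    (hpos : ∀ i ≤ n, ∀ᵐ ω ∂P, 0 < f i ω)
    (hcycle : f 0 =ᵐ[P] f n)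
    (hrel : ∀ i, 1 ≤ i → i ≤ n → ∫⁻ ω, qdiv (f (i - 1) ω) (f i ω) ∂P ≤ 1) :
    ∀ i ≤ n, f i =ᵐ[P] f 0 := by
  classical
  set g : ℕ → Ω → ℝ := fun j ω => f j ω / f (j + 1) ω with hgdef
  have hA : ∀ᵐ ω ∂P, (∀ i, i ≤ n → 0 < f i ω) ∧ f 0 ω = f n ω := by
    refine (ae_all_iff.2 ?_).and hcycle
    intro i
    by_cases h : i ≤ n
    · filter_upwards [hpos i h] with ω hω _
      exact hω
    · filter_upwards with ω hi
      exact absurd hi h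
  have hmg : ∀ j < n, Measurable (g j) := fun j hj =>
    (hmeas j hj.le).div (hmeas (j + 1) hj)
  have hqg : ∀ j < n, ∫⁻ ω, ENNReal.ofReal (g j ω) ∂P ≤ 1 := by
    intro j hj
    have h0 := hrel (j + 1) (by omega) hj
    simp only [Nat.add_sub_cancel] at h0
    refine le_trans (le_of_eq (lintegral_congr_ae ?_)) h0
    filter_upwards [hA] with ω hω
    have h1 : 0 < f j ω := hω.1 j hj.le
    have h2 : 0 < f (j + 1) ω := hω.1 (j + 1) hj
    simp [qdiv, h1.ne', h2.ne', hgdef]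
  set s : Ω → ℝ := fun ω => ∑ j ∈ Finset.range n, g j ω with hsdef
  have key : ∀ᵐ ω ∂P, (n : ℝ) ≤ s ω ∧
      (∑ j ∈ Finset.range n, Real.log (g j ω) = 0) ∧
      (∀ j ∈ Finset.range n, 0 < g j ω) := by
    filter_upwards [hA] with ω hω
    obtain ⟨hpos', hcyc⟩ := hω
    have hgpos : ∀ j ∈ Finset.range n, 0 < g j ω := by
      intro j hj
      rw [Finset.mem_range] at hj
      exact div_pos (hpos' j hj.le) (hpos' (j + 1) hj)
    have hlog : ∀ j ∈ Finset.range n,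
        Real.log (g j ω) = Real.log (f j ω) - Real.log (f (j + 1) ω) := by
      intro j hj
      rw [Finset.mem_range] at hj
      exact Real.log_div (hpos' j hj.le).ne' (hpos' (j + 1) hj).ne'
    have hsum0 : ∑ j ∈ Finset.range n, Real.log (g j ω) = 0 := by
      rw [Finset.sum_congr rfl hlog,
        Finset.sum_range_sub' (fun i => Real.log (f i ω)), hcyc, sub_self]
    refine ⟨?_, hsum0, hgpos⟩
    have hle : ∀ j ∈ Finset.range n, 1 + Real.log (g j ω) ≤ g j ω := by
      intro j hj
      have := Real.log_le_sub_one_of_pos (hgpos j hj)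
      linarith
    calc (n : ℝ) = ∑ j ∈ Finset.range n, (1 + Real.log (g j ω)) := by
          rw [Finset.sum_add_distrib, hsum0]; simp
      _ ≤ s ω := Finset.sum_le_sum hle
  have hls : ∫⁻ ω, ENNReal.ofReal (s ω) ∂P ≤ n := by
    have heq : ∀ᵐ ω ∂P,
        ENNReal.ofReal (s ω) = ∑ j ∈ Finset.range n, ENNReal.ofReal (g j ω) := by
      filter_upwards [key] with ω hω
      exact ENNReal.ofReal_sum_of_nonneg fun j hj => (hω.2.2 j hj).le
    rw [lintegral_congr_ae heq,
      lintegral_finset_sum _ fun j hj => (hmg j (Finset.mem_range.1 hj)).ennreal_ofReal]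
    calc ∑ j ∈ Finset.range n, ∫⁻ ω, ENNReal.ofReal (g j ω) ∂P
        ≤ ∑ j ∈ Finset.range n, 1 :=
          Finset.sum_le_sum fun j hj => hqg j (Finset.mem_range.1 hj)
      _ = n := by simp
  have hsmeas : Measurable s := by
    apply Finset.measurable_sum
    intro j hj
    exact hmg j (Finset.mem_range.1 hj)
  have hsn : ∀ᵐ ω ∂P, s ω = n := by
    have h1 : (fun _ : Ω => (n : ℝ≥0∞)) ≤ᵐ[P] fun ω => ENNReal.ofReal (s ω) := by
      filter_upwards [key] with ω hω
      calc (n : ℝ≥0∞) = ENNReal.ofReal (n : ℝ) := by simp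
        _ ≤ ENNReal.ofReal (s ω) := ENNReal.ofReal_le_ofReal hω.1
    have hfin : ∫⁻ _, (n : ℝ≥0∞) ∂P ≠ ⊤ := by simp
    have heq := ae_eq_of_ae_le_of_lintegral_le h1 hfin
      hsmeas.ennreal_ofReal.aemeasurable (by simpa using hls)
    filter_upwards [heq, key] with ω hω hω'
    have : ENNReal.ofReal (n : ℝ) = ENNReal.ofReal (s ω) := by simpa using hω
    have hn0 : (0 : ℝ) ≤ (n : ℝ) := Nat.cast_nonneg n
    have := (ENNReal.ofReal_eq_ofReal_iff hn0 (hn0.trans hω'.1)).1 this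
    exact this.symm
  have hstep : ∀ j < n, f (j + 1) =ᵐ[P] f j := by
    intro j hj
    filter_upwards [hsn, key, hA] with ω hωs hωk hωA
    obtain ⟨hge, hsum0, hgpos⟩ := hωk
    have hterm : ∀ k ∈ Finset.range n, (0 : ℝ) ≤ g k ω - 1 - Real.log (g k ω) := by
      intro k hk
      have := Real.log_le_sub_one_of_pos (hgpos k hk)
      linarith
    have hsumz : ∑ k ∈ Finset.range n, (g k ω - 1 - Real.log (g k ω)) = 0 := by
      rw [Finset.sum_sub_distrib, Finset.sum_sub_distrib, hsum0]
      simp only [Finset.sum_const, Finset.card_range, nsmul_eq_mul, mul_one, sub_zero]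
      rw [← hsdef] at *
      linarith [hωs]
    have hz := (Finset.sum_eq_zero_iff_of_nonneg hterm).1 hsumz j (Finset.mem_range.2 hj)
    have hg1 : g j ω = 1 := by
      by_contra hne
      have := Real.log_lt_sub_one_of_pos (hgpos j (Finset.mem_range.2 hj)) hne
      linarith
    have h2 : 0 < f (j + 1) ω := hωA.1 (j + 1) hj
    have : f j ω / f (j + 1) ω = 1 := hg1
    field_simp at this
    exact this.symm
  intro i hi
  induction i with
  | zero => exact Filter.EventuallyEq.refl _ _
  | succ k ih =>
    have hk : k < n := hi
    exact (hstep k hk).trans (ih (by omega))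
end

section
/- Insurance reversal: if f, g are nonnegative random variables with P[g < f] > 0, E[(g-f)/f · 1_{g<f}] < 0 and finite, then there exists N ∈ ℕ such that, with h := N·g·1_{f ≤ g}, one has E[(g+h)/(f+h)] < 1. -/
open MeasureTheory
open scoped ENNReal

/-- Insurance reversal: if `P[g < f] > 0` and `E[(g-f)/f · 1_{g<f}]` is finite and
negative, then there is `N ∈ ℕ` such that, with `h = N·g·1_{f ≤ g}`,
`E[(g+h)/(f+h)] < 1`. -/
theorem stmt9 {Ω : Type*} [MeasurableSpace Ω] (P : Measure Ω) [IsProbabilityMeasure P]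
    (f g : Ω → ℝ) (hf : Measurable f) (hg : Measurable g)
    (hf0 : ∀ ω, 0 ≤ f ω) (hg0 : ∀ ω, 0 ≤ g ω)
    (hlt : 0 < P {ω | g ω < f ω})
    (hint : Integrable (fun ω => if g ω < f ω then (g ω - f ω) / f ω else 0) P)
    (hneg : ∫ ω, (if g ω < f ω then (g ω - f ω) / f ω else 0) ∂P < 0) :
    ∃ N : ℕ,
      ∫⁻ ω, qdiv (g ω + N * g ω * (if f ω ≤ g ω then 1 else 0))
        (f ω + N * g ω * (if f ω ≤ g ω then 1 else 0)) ∂P < 1 := by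
  set I := ∫ ω, (if g ω < f ω then (g ω - f ω) / f ω else 0) ∂P with hI
  obtain ⟨n, hn⟩ := exists_nat_one_div_lt (show (0:ℝ) < -I by linarith)
  set N : ℕ := n + 1 with hN
  have hNpos : (0:ℝ) < N := by positivity
  refine ⟨N, ?_⟩
  set u : Ω → ℝ := fun ω => if g ω < f ω then (g ω - f ω) / f ω else 1/(N:ℝ) with hu
  -- pointwise bound
  have key : ∀ ω, qdiv (g ω + N * g ω * (if f ω ≤ g ω then 1 else 0))
      (f ω + N * g ω * (if f ω ≤ g ω then 1 else 0)) ≤ ENNReal.ofReal (1 + u ω) := by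
    intro ω
    by_cases hlt' : g ω < f ω
    · have hfle : ¬ f ω ≤ g ω := not_le.mpr hlt'
      have hfpos : 0 < f ω := lt_of_le_of_lt (hg0 ω) hlt'
      simp only [hu, if_pos hlt', if_neg hfle, mul_zero, add_zero]
      have : 1 + (g ω - f ω) / f ω = g ω / f ω := by field_simp; ring
      rw [this, qdiv, if_neg (by push_neg; intro _; exact hfpos.ne'), if_neg hfpos.ne']
    · have hfle : f ω ≤ g ω := not_lt.mp hlt'
      simp only [hu, if_neg hlt', if_pos hfle, mul_one]
      by_cases hg' : g ω = 0
      · have hf' : f ω = 0 := le_antisymm (hg' ▸ hfle) (hf0 ω)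
        rw [hg', hf']
        simp only [mul_zero, add_zero, qdiv, if_pos (And.intro rfl rfl)]
        rw [show (1:ℝ≥0∞) = ENNReal.ofReal 1 by simp]
        apply ENNReal.ofReal_le_ofReal
        have : 0 ≤ 1/(N:ℝ) := by positivity
        linarith
      · have hgpos : 0 < g ω := lt_of_le_of_ne (hg0 ω) (Ne.symm hg')
        have hden : 0 < f ω + N * g ω := by
          have := hf0 ω; nlinarith
        rw [qdiv, if_neg (by push_neg; intro _; exact hden.ne'), if_neg hden.ne']
        apply ENNReal.ofReal_le_ofReal
        rw [div_le_iff₀ hden]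
        have hf' := hf0 ω
        have h1 : (1/(N:ℝ)) * N = 1 := by field_simp
        nlinarith [mul_nonneg (by positivity : (0:ℝ) ≤ 1/(N:ℝ)) hf']
  -- integrability of u
  have hmeas : MeasurableSet {ω | g ω < f ω} := measurableSet_lt hg hf
  have hind : Integrable (fun ω => if g ω < f ω then 0 else 1/(N:ℝ)) P := by
    have : (fun ω => if g ω < f ω then 0 else 1/(N:ℝ))
        = Set.indicator {ω | ¬ g ω < f ω} (fun _ => 1/(N:ℝ)) := by
      funext ω
      by_cases h : g ω < f ω
      · simp [Set.indicator, h, not_le.mpr h]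
      · simp [Set.indicator, h, not_lt.mp h]
    rw [this]
    exact (integrable_const _).indicator hmeas.compl
  have huint : Integrable u P := by
    have : u = fun ω => (if g ω < f ω then (g ω - f ω) / f ω else 0)
        + (if g ω < f ω then 0 else 1/(N:ℝ)) := by
      funext ω
      by_cases h : g ω < f ω <;> simp [hu, h]
    rw [this]
    exact hint.add hind
  have hmeas' : MeasurableSet {ω | ¬ g ω < f ω} := hmeas.compl
  -- integral of u is negative
  have hPle : ((P {ω | ¬ g ω < f ω}).toReal) ≤ 1 := by
    have := prob_le_one (μ := P) (s := {ω | ¬ g ω < f ω})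
    exact ENNReal.toReal_le_of_le_ofReal zero_le_one (by simpa using this)
  have hIu : ∫ ω, u ω ∂P < 0 := by
    have hsplit : ∫ ω, u ω ∂P = I + ∫ ω, (if g ω < f ω then 0 else 1/(N:ℝ)) ∂P := by
      rw [hI, ← integral_add hint hind]
      congr 1; funext ω
      by_cases h : g ω < f ω <;> simp [hu, h]
    have hind_val : ∫ ω, (if g ω < f ω then 0 else 1/(N:ℝ)) ∂P
        = (P {ω | ¬ g ω < f ω}).toReal * (1/(N:ℝ)) := by
      have : (fun ω => if g ω < f ω then 0 else 1/(N:ℝ))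
          = Set.indicator {ω | ¬ g ω < f ω} (fun _ => 1/(N:ℝ)) := by
        funext ω
        by_cases h : g ω < f ω
        · simp [Set.indicator, h, not_le.mpr h]
        · simp [Set.indicator, h, not_lt.mp h]
      rw [this, integral_indicator_const _ hmeas']
      simp [mul_comm]; rfl
    have h1N : (P {ω | ¬ g ω < f ω}).toReal * (1/(N:ℝ)) ≤ 1/(N:ℝ) := by
      have : (0:ℝ) ≤ 1/(N:ℝ) := by positivity
      nlinarith
    have hn' : 1/(N:ℝ) < -I := by
      rw [hN]; push_cast; exact hn
    rw [hsplit, hind_val]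
    linarith
  -- nonnegativity of 1 + u
  have h1u : ∀ ω, 0 ≤ 1 + u ω := by
    intro ω
    rw [hu]
    by_cases h : g ω < f ω
    · have hfpos : 0 < f ω := lt_of_le_of_lt (hg0 ω) h
      have : 1 + (g ω - f ω) / f ω = g ω / f ω := by field_simp; ring
      simp only [if_pos h, this]
      exact div_nonneg (hg0 ω) (hf0 ω)
    · simp only [if_neg h]
      have : 0 ≤ 1/(N:ℝ) := by positivity
      linarith
  calc ∫⁻ ω, qdiv (g ω + N * g ω * (if f ω ≤ g ω then 1 else 0))
        (f ω + N * g ω * (if f ω ≤ g ω then 1 else 0)) ∂P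
      ≤ ∫⁻ ω, ENNReal.ofReal (1 + u ω) ∂P := lintegral_mono key
    _ = ENNReal.ofReal (∫ ω, (1 + u ω) ∂P) := by
        have hint1 : Integrable (fun ω => 1 + u ω) P := (integrable_const 1).add huint
        rw [← ofReal_integral_eq_lintegral_ofReal hint1
          (Filter.Eventually.of_forall h1u)]
    _ < 1 := by
        rw [integral_add (integrable_const 1) huint, integral_const]
        simp only [measure_univ, probReal_univ, ENNReal.toReal_one, smul_eq_mul, one_mul]
        rw [ENNReal.ofReal_lt_one]
        linarith
end

section
/- If f > 0 a.s. with f bounded above by a constant M and E_P[log f] < 0, then there exists n ∈ ℕ such that E_P[f^{1/n}] ≤ 1. -/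
open MeasureTheory Filter
open scoped ENNReal Topology

private lemma aux_anti {x : ℝ} (hx : 0 < x) (n : ℕ) :
    ((n : ℝ) + 2) * (x ^ (1 / ((n : ℝ) + 2)) - 1) ≤
      ((n : ℝ) + 1) * (x ^ (1 / ((n : ℝ) + 1)) - 1) := by
  set y := x ^ (1 / ((n : ℝ) + 2)) with hy
  have hy0 : 0 < y := Real.rpow_pos_of_pos hx _
  have hn1 : (0:ℝ) < (n : ℝ) + 1 := by positivity
  have hn2 : (0:ℝ) < (n : ℝ) + 2 := by positivity
  set p : ℝ := ((n : ℝ) + 2) / ((n : ℝ) + 1) with hp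
  have hp1 : 1 ≤ p := by rw [hp, le_div_iff₀ hn1]; linarith
  have hxy : x ^ (1 / ((n : ℝ) + 1)) = y ^ p := by
    rw [hy, ← Real.rpow_mul hx.le]
    congr 1
    rw [hp]
    field_simp
  have hb := one_add_mul_self_le_rpow_one_add (s := y - 1) (by linarith) hp1
  rw [add_sub_cancel] at hb
  rw [hxy]
  have hpn : ((n : ℝ) + 1) * p = (n : ℝ) + 2 := by
    rw [hp]; field_simp
  nlinarith [mul_le_mul_of_nonneg_left hb hn1.le]

private lemma aux_log_le {x : ℝ} (hx : 0 < x) (n : ℕ) :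
    Real.log x ≤ ((n : ℝ) + 1) * (x ^ (1 / ((n : ℝ) + 1)) - 1) := by
  have hn1 : (0:ℝ) < (n : ℝ) + 1 := by positivity
  have h1 : Real.log (x ^ (1 / ((n : ℝ) + 1))) = (1 / ((n : ℝ) + 1)) * Real.log x :=
    Real.log_rpow hx _
  have h2 : Real.log (x ^ (1 / ((n : ℝ) + 1))) ≤ x ^ (1 / ((n : ℝ) + 1)) - 1 :=
    Real.log_le_sub_one_of_pos (Real.rpow_pos_of_pos hx _)
  rw [h1] at h2
  have := mul_le_mul_of_nonneg_left h2 hn1.le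
  calc Real.log x = ((n : ℝ) + 1) * ((1 / ((n : ℝ) + 1)) * Real.log x) := by
        field_simp
    _ ≤ ((n : ℝ) + 1) * (x ^ (1 / ((n : ℝ) + 1)) - 1) := this

private lemma aux_tendsto {x : ℝ} (hx : 0 < x) :
    Tendsto (fun n : ℕ => ((n : ℝ) + 1) * (x ^ (1 / ((n : ℝ) + 1)) - 1)) atTop
      (𝓝 (Real.log x)) := by
  have hD : HasDerivAt (fun t : ℝ => x ^ t) (Real.log x) 0 := by
    have := (Real.hasStrictDerivAt_const_rpow hx 0).hasDerivAt
    simpa using this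
  have hslope := hasDerivAt_iff_tendsto_slope.mp hD
  have h0 : Tendsto (fun n : ℕ => 1 / ((n : ℝ) + 1)) atTop (𝓝[≠] (0:ℝ)) := by
    apply tendsto_nhdsWithin_of_tendsto_nhds_of_eventually_within
    · exact tendsto_one_div_add_atTop_nhds_zero_nat
    · filter_upwards with n
      have : (0:ℝ) < (n : ℝ) + 1 := by positivity
      simp [Set.mem_compl_singleton_iff]
      positivity
  have := hslope.comp h0
  refine this.congr fun n => ?_
  have hn1 : (0:ℝ) < (n : ℝ) + 1 := by positivity
  simp only [Function.comp, slope_def_field, sub_zero, Real.rpow_zero, one_div, div_inv_eq_mul]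
  ring

/-- If `0 < f ≤ M` a.s. and `E_P[log f] < 0` (in the extended sense
`E[log_+ f] < E[log_- f]`), then `E_P[f^(1/n)] ≤ 1` for some `n ≥ 1`. -/
theorem stmt14 {Ω : Type*} [MeasurableSpace Ω] (P : Measure Ω) [IsProbabilityMeasure P]
    (M : ℝ) (hM : 0 < M) (f : Ω → ℝ) (hf : Measurable f)
    (hpos : ∀ᵐ ω ∂P, 0 < f ω) (hbdd : ∀ᵐ ω ∂P, f ω ≤ M)
    (hlog : ∫⁻ ω, ENNReal.ofReal (Real.log (f ω)) ∂P <
      ∫⁻ ω, ENNReal.ofReal (-Real.log (f ω)) ∂P) :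
    ∃ n : ℕ, 0 < n ∧ ∫⁻ ω, ENNReal.ofReal (f ω ^ (1 / (n : ℝ))) ∂P ≤ 1 := by
  have hmeas : ∀ n : ℕ, Measurable fun ω => ((n:ℝ)+1) * (f ω ^ (1/((n:ℝ)+1)) - 1) :=
    fun n => by fun_prop
  -- key pointwise facts, valid a.e.
  have key : ∀ᵐ ω ∂P, Antitone (fun k : ℕ => ((k:ℝ)+1) * (f ω ^ (1/((k:ℝ)+1)) - 1)) ∧
      Tendsto (fun k : ℕ => ((k:ℝ)+1) * (f ω ^ (1/((k:ℝ)+1)) - 1)) atTop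
        (𝓝 (Real.log (f ω))) ∧
      (∀ k : ℕ, ((k:ℝ)+1) * (f ω ^ (1/((k:ℝ)+1)) - 1) ≤ M) := by
    filter_upwards [hpos, hbdd] with ω h1 h2
    have hanti : Antitone (fun k : ℕ => ((k:ℝ)+1) * (f ω ^ (1/((k:ℝ)+1)) - 1)) := by
      refine antitone_nat_of_succ_le fun k => ?_
      have hc : ((k+1:ℕ):ℝ) + 1 = (k:ℝ) + 2 := by push_cast; ring
      show (((k+1:ℕ):ℝ) + 1) * (f ω ^ (1/(((k+1:ℕ):ℝ)+1)) - 1) ≤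
        ((k:ℝ) + 1) * (f ω ^ (1/((k:ℝ)+1)) - 1)
      rw [hc]
      exact aux_anti h1 k
    refine ⟨hanti, aux_tendsto h1, fun k => ?_⟩
    have h0 : ((0:ℕ):ℝ)+1 = (1:ℝ) := by norm_num
    have := hanti (Nat.zero_le k)
    simp only [h0] at this
    rw [one_mul] at this
    have h11 : f ω ^ (1/(1:ℝ)) = f ω := by
      norm_num
    rw [h11] at this
    linarith
  -- convergence of positive parts
  have hAt : Tendsto (fun n : ℕ => ∫⁻ ω,
      ENNReal.ofReal (((n:ℝ)+1) * (f ω ^ (1/((n:ℝ)+1)) - 1)) ∂P) atTop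
      (𝓝 (∫⁻ ω, ENNReal.ofReal (Real.log (f ω)) ∂P)) := by
    refine tendsto_lintegral_of_dominated_convergence (fun _ => ENNReal.ofReal M)
      (fun n => (hmeas n).ennreal_ofReal) (fun n => ?_) ?_ ?_
    · filter_upwards [key] with ω hω
      exact ENNReal.ofReal_le_ofReal (hω.2.2 n)
    · simp [lintegral_const]
    · filter_upwards [key] with ω hω
      exact ENNReal.tendsto_ofReal hω.2.1
  -- convergence of negative parts
  have hBt : Tendsto (fun n : ℕ => ∫⁻ ω,
      ENNReal.ofReal (-(((n:ℝ)+1) * (f ω ^ (1/((n:ℝ)+1)) - 1))) ∂P) atTop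
      (𝓝 (∫⁻ ω, ENNReal.ofReal (-Real.log (f ω)) ∂P)) := by
    refine lintegral_tendsto_of_tendsto_of_monotone
      (fun n => ((hmeas n).neg.ennreal_ofReal).aemeasurable) ?_ ?_
    · filter_upwards [key] with ω hω
      intro i j hij
      exact ENNReal.ofReal_le_ofReal (neg_le_neg (hω.1 hij))
    · filter_upwards [key] with ω hω
      exact ENNReal.tendsto_ofReal hω.2.1.neg
  obtain ⟨n, hn⟩ := (hAt.eventually_lt hBt hlog).exists
  -- the chosen n works
  have hn1 : (0:ℝ) < (n:ℝ)+1 := by positivity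
  have hBfin : (∫⁻ ω, ENNReal.ofReal (-(((n:ℝ)+1) * (f ω ^ (1/((n:ℝ)+1)) - 1))) ∂P) ≠ ∞ := by
    refine ne_top_of_le_ne_top (b := ENNReal.ofReal ((n:ℝ)+1)) ENNReal.ofReal_ne_top ?_
    calc (∫⁻ ω, ENNReal.ofReal (-(((n:ℝ)+1) * (f ω ^ (1/((n:ℝ)+1)) - 1))) ∂P)
        ≤ ∫⁻ _, ENNReal.ofReal ((n:ℝ)+1) ∂P := by
          refine lintegral_mono_ae ?_
          filter_upwards [hpos] with ω h1
          refine ENNReal.ofReal_le_ofReal ?_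
          have hg : 0 < f ω ^ (1/((n:ℝ)+1)) := Real.rpow_pos_of_pos h1 _
          nlinarith
      _ = ENNReal.ofReal ((n:ℝ)+1) := by simp [lintegral_const]
  have hAfin : (∫⁻ ω, ENNReal.ofReal (((n:ℝ)+1) * (f ω ^ (1/((n:ℝ)+1)) - 1)) ∂P) ≠ ∞ :=
    ne_top_of_lt hn
  have hIntl : Integrable (fun ω => ((n:ℝ)+1) * (f ω ^ (1/((n:ℝ)+1)) - 1)) P := by
    refine Integrable.mono' (integrable_const (M + ((n:ℝ)+1)))
      (hmeas n).aestronglyMeasurable ?_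
    filter_upwards [hpos, key] with ω h1 hω
    rw [Real.norm_eq_abs, abs_le]
    have hg : 0 < f ω ^ (1/((n:ℝ)+1)) := Real.rpow_pos_of_pos h1 _
    constructor
    · nlinarith
    · have := hω.2.2 n
      linarith
  have hneg : ∫ ω, ((n:ℝ)+1) * (f ω ^ (1/((n:ℝ)+1)) - 1) ∂P < 0 := by
    rw [integral_eq_lintegral_pos_part_sub_lintegral_neg_part hIntl]
    have := (ENNReal.toReal_lt_toReal hAfin hBfin).mpr hn
    linarith
  have hg_nn : 0 ≤ᵐ[P] fun ω => f ω ^ (1/((n:ℝ)+1)) := by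
    filter_upwards [hpos] with ω h1
    exact (Real.rpow_pos_of_pos h1 _).le
  have hgint : Integrable (fun ω => f ω ^ (1/((n:ℝ)+1))) P := by
    have : (fun ω => f ω ^ (1/((n:ℝ)+1))) =
        fun ω => 1 + (1/((n:ℝ)+1)) * (((n:ℝ)+1) * (f ω ^ (1/((n:ℝ)+1)) - 1)) := by
      funext ω; field_simp; ring
    rw [this]
    exact (integrable_const 1).add (hIntl.const_mul _)
  have hgval : ∫ ω, f ω ^ (1/((n:ℝ)+1)) ∂P ≤ 1 := by
    have hcongr : ∫ ω, f ω ^ (1/((n:ℝ)+1)) ∂P =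
        ∫ ω, (1 + (1/((n:ℝ)+1)) * (((n:ℝ)+1) * (f ω ^ (1/((n:ℝ)+1)) - 1))) ∂P := by
      refine integral_congr_ae (Filter.Eventually.of_forall fun ω => ?_)
      field_simp; ring
    rw [hcongr, integral_add (integrable_const 1) (hIntl.const_mul _), integral_const,
      integral_const_mul]
    simp only [measure_univ, ENNReal.toReal_one, smul_eq_mul, one_mul, probReal_univ]
    have hc : 0 < 1/((n:ℝ)+1) := by positivity
    nlinarith
  refine ⟨n+1, Nat.succ_pos n, ?_⟩
  have hcast : ∀ ω, f ω ^ (1 / ((n+1:ℕ):ℝ)) = f ω ^ (1/((n:ℝ)+1)) := by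
    intro ω; norm_num
  simp only [hcast]
  rw [← ofReal_integral_eq_lintegral_ofReal hgint hg_nn]
  exact ENNReal.ofReal_le_one.mpr hgval
end

section
/- Optimality of proportional consumption via supermartingale bound: let N be a nonnegative càdlàg supermartingale with N_0 = 1, and F an adapted, right-continuous, nondecreasing process with 0 ≤ F ≤ 1 and F_{0-} = 0. Then E[∫_{[0,τ]} N_t dF_t] ≤ 1 for every finite stopping time τ with E[sup_{t ≤ τ} N_t] < ∞, and consequently E[∫_{[0,∞)} N_t dF_t] ≤ 1. -/
open MeasureTheory Filter
open scoped ENNReal NNReal Topology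

noncomputable def aux18pt (m k : ℕ) : ℝ≥0 := (k : ℝ≥0) / 2 ^ m

noncomputable def aux18g (m : ℕ) (x : ℝ) : ℕ := ⌈x * 2 ^ m⌉₊

noncomputable def aux18S {Ω : Type*} (N : ℝ≥0 → Ω → ℝ) (F : Ω → StieltjesFunction ℝ)
    (m K : ℕ) (ω : Ω) : ℝ :=
  F ω 0 * N 0 ω + ∑ k ∈ Finset.range K,
    (F ω (aux18pt m (k + 1) : ℝ) - F ω (aux18pt m k : ℝ)) * N (aux18pt m (k + 1)) ω

section
variable {Ω : Type*} {m : MeasurableSpace Ω} (𝓕 : Filtration ℝ≥0 m)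
    (P : Measure Ω) [IsProbabilityMeasure P] (N : ℝ≥0 → Ω → ℝ)
    (F : Ω → StieltjesFunction ℝ)

lemma aux18core (hN : Supermartingale N 𝓕 P) {s t : ℝ≥0} (hst : s ≤ t)
    (G : Ω → ℝ) (hG : StronglyMeasurable[𝓕 s] G)
    (hG0 : ∀ ω, 0 ≤ G ω) (hG1 : ∀ ω, G ω ≤ 1) :
    ∫ ω, G ω * N t ω ∂P ≤ ∫ ω, G ω * N s ω ∂P := by
  have hGm : AEStronglyMeasurable G P := (hG.mono (𝓕.le s)).aestronglyMeasurable
  have hbdd : ∀ ω, ‖G ω‖ ≤ 1 := fun ω => by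
    rw [Real.norm_eq_abs, abs_of_nonneg (hG0 ω)]; exact hG1 ω
  have hint_t : Integrable (fun ω => G ω * N t ω) P :=
    (hN.integrable t).bdd_mul hGm (Eventually.of_forall hbdd)
  have hint_s : Integrable (fun ω => G ω * N s ω) P :=
    (hN.integrable s).bdd_mul hGm (Eventually.of_forall hbdd)
  have hce : P[fun ω => G ω * N t ω | 𝓕 s] =ᵐ[P] fun ω => G ω * (P[N t | 𝓕 s]) ω :=
    condExp_stronglyMeasurable_mul_of_bound (𝓕.le s) hG (hN.integrable t) 1
      (Eventually.of_forall hbdd)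
  have hintc : Integrable (fun ω => G ω * (P[N t | 𝓕 s]) ω) P :=
    integrable_condExp.bdd_mul hGm (Eventually.of_forall hbdd)
  calc ∫ ω, G ω * N t ω ∂P = ∫ ω, (P[fun ω => G ω * N t ω | 𝓕 s]) ω ∂P :=
        (integral_condExp (𝓕.le s)).symm
    _ = ∫ ω, G ω * (P[N t | 𝓕 s]) ω ∂P := integral_congr_ae hce
    _ ≤ ∫ ω, G ω * N s ω ∂P := by
        refine integral_mono_ae hintc hint_s ?_
        filter_upwards [hN.2.1 s t hst] with ω hω
        exact mul_le_mul_of_nonneg_left hω (hG0 ω)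

variable (hN : Supermartingale N 𝓕 P) (hNnn : ∀ ω t, 0 ≤ N t ω) (hN0 : ∀ᵐ ω ∂P, N 0 ω = 1)
    (hFneg : ∀ ω, ∀ x : ℝ, x < 0 → F ω x = 0)
    (hF1 : ∀ ω x, F ω x ≤ 1)
    (hFadapted : ∀ t : ℝ≥0, Measurable[𝓕 t] fun ω => F ω (t : ℝ))

include hFneg hF1 in
lemma aux18F0 : ∀ ω (x : ℝ), 0 ≤ F ω x := by
  intro ω x
  rcases lt_or_ge x 0 with h | h
  · rw [hFneg ω x h]
  · rw [← hFneg ω (-1) (by norm_num)]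
    exact (F ω).mono (by linarith)

include hFadapted in
lemma aux18Fmeas : ∀ u : ℝ≥0, Measurable fun ω => F ω (u : ℝ) := fun u =>
  (hFadapted u).mono (𝓕.le u) le_rfl

include hN hN0 hFneg hF1 hFadapted in
lemma aux18discrete (t : ℕ → ℝ≥0) (htm : Monotone t) (ht0 : t 0 = 0) : ∀ K : ℕ,
    ∫ ω, (F ω 0 * N 0 ω + ∑ k ∈ Finset.range K,
        (F ω ((t (k + 1) : ℝ≥0) : ℝ) - F ω ((t k : ℝ≥0) : ℝ)) * N (t (k + 1)) ω
      + (1 - F ω ((t K : ℝ≥0) : ℝ)) * N (t K) ω) ∂P ≤ 1 := by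
  have hF0 := aux18F0 F hFneg hF1
  have hFm := aux18Fmeas 𝓕 F hFadapted
  have hFm0 : Measurable fun ω => F ω (0 : ℝ) := by simpa using hFm 0
  have habs : ∀ (a : Ω → ℝ), Measurable a → (∀ ω, 0 ≤ a ω) → (∀ ω, a ω ≤ 1) →
      ∀ (u : ℝ≥0), Integrable (fun ω => a ω * N u ω) P := by
    intro a ha ha0 ha1 u
    refine (hN.integrable u).bdd_mul (c := 1) ha.aestronglyMeasurable
      (Eventually.of_forall fun ω => ?_)
    rw [Real.norm_eq_abs, abs_of_nonneg (ha0 ω)]; exact ha1 ω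
  -- integrability of pieces
  have hintdiff : ∀ (j k : ℕ) (u : ℝ≥0),
      Integrable (fun ω => (F ω ((t j : ℝ≥0) : ℝ) - F ω ((t k : ℝ≥0) : ℝ)) * N u ω) P := by
    intro j k u
    refine (hN.integrable u).bdd_mul (c := 1)
      ((hFm (t j)).sub (hFm (t k))).aestronglyMeasurable
      (Eventually.of_forall fun ω => ?_)
    rw [Real.norm_eq_abs, abs_sub_le_iff]
    constructor <;> nlinarith [hF0 ω ((t j : ℝ≥0) : ℝ), hF1 ω ((t j : ℝ≥0) : ℝ),
      hF0 ω ((t k : ℝ≥0) : ℝ), hF1 ω ((t k : ℝ≥0) : ℝ)]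
  have hintA : ∀ K : ℕ, Integrable (fun ω => F ω 0 * N 0 ω + ∑ k ∈ Finset.range K,
      (F ω ((t (k + 1) : ℝ≥0) : ℝ) - F ω ((t k : ℝ≥0) : ℝ)) * N (t (k + 1)) ω) P := by
    intro K
    refine Integrable.add ?_ (integrable_finset_sum _ fun k _ => hintdiff _ _ _)
    exact habs _ hFm0 (fun ω => hF0 ω 0) (fun ω => hF1 ω 0) 0
  have hinttail : ∀ (j : ℕ) (u : ℝ≥0),
      Integrable (fun ω => (1 - F ω ((t j : ℝ≥0) : ℝ)) * N u ω) P := fun j u =>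
    habs _ (measurable_const.sub (hFm (t j)))
      (fun ω => by simp only [Pi.sub_apply]; linarith [hF1 ω ((t j : ℝ≥0) : ℝ)])
      (fun ω => by simp only [Pi.sub_apply]; linarith [hF0 ω ((t j : ℝ≥0) : ℝ)]) u
  intro K
  induction K with
  | zero =>
    have heq : (fun ω => F ω 0 * N 0 ω + ∑ k ∈ Finset.range 0,
        (F ω ((t (k + 1) : ℝ≥0) : ℝ) - F ω ((t k : ℝ≥0) : ℝ)) * N (t (k + 1)) ω
        + (1 - F ω ((t 0 : ℝ≥0) : ℝ)) * N (t 0) ω) = N 0 := by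
      funext ω
      rw [ht0]
      simp only [Finset.sum_range_zero, NNReal.coe_zero, add_zero]
      ring
    rw [heq, integral_congr_ae hN0]
    simp
  | succ K ih =>
    have hstep : (fun ω => F ω 0 * N 0 ω + ∑ k ∈ Finset.range (K + 1),
        (F ω ((t (k + 1) : ℝ≥0) : ℝ) - F ω ((t k : ℝ≥0) : ℝ)) * N (t (k + 1)) ω
        + (1 - F ω ((t (K + 1) : ℝ≥0) : ℝ)) * N (t (K + 1)) ω)
        = fun ω => (F ω 0 * N 0 ω + ∑ k ∈ Finset.range K,
        (F ω ((t (k + 1) : ℝ≥0) : ℝ) - F ω ((t k : ℝ≥0) : ℝ)) * N (t (k + 1)) ω)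
        + (1 - F ω ((t K : ℝ≥0) : ℝ)) * N (t (K + 1)) ω := by
      funext ω
      rw [Finset.sum_range_succ]
      ring
    rw [hstep]
    rw [integral_add (hintA K) (hinttail K (t (K + 1)))]
    have hcore : ∫ ω, (1 - F ω ((t K : ℝ≥0) : ℝ)) * N (t (K + 1)) ω ∂P
        ≤ ∫ ω, (1 - F ω ((t K : ℝ≥0) : ℝ)) * N (t K) ω ∂P := by
      refine aux18core 𝓕 P N hN (htm (Nat.le_succ K)) _
        (measurable_const.sub (hFadapted (t K))).stronglyMeasurable
        (fun ω => by linarith [hF1 ω ((t K : ℝ≥0) : ℝ)])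
        (fun ω => by linarith [hF0 ω ((t K : ℝ≥0) : ℝ)])
    calc _ ≤ (∫ ω, (F ω 0 * N 0 ω + ∑ k ∈ Finset.range K,
          (F ω ((t (k + 1) : ℝ≥0) : ℝ) - F ω ((t k : ℝ≥0) : ℝ)) * N (t (k + 1)) ω) ∂P)
          + ∫ ω, (1 - F ω ((t K : ℝ≥0) : ℝ)) * N (t K) ω ∂P := by
          exact add_le_add_right hcore _
      _ = _ := (integral_add (hintA K) (hinttail K (t K))).symm
      _ ≤ 1 := ih

lemma aux18pt_mono (m : ℕ) : Monotone (aux18pt m) := fun a b hab => by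
  unfold aux18pt
  exact div_le_div_of_nonneg_right (by exact_mod_cast hab) (by positivity)

lemma aux18pt_zero (m : ℕ) : aux18pt m 0 = 0 := by simp [aux18pt]

include hN hNnn hN0 hFneg hF1 hFadapted in
lemma aux18Sbound (m K : ℕ) :
    ∫⁻ ω, ENNReal.ofReal (aux18S N F m K ω) ∂P ≤ 1 := by
  have hF0 := aux18F0 F hFneg hF1
  have hFm := aux18Fmeas 𝓕 F hFadapted
  have hFm0 : Measurable fun ω => F ω (0 : ℝ) := by simpa using hFm 0
  have hNmeas : ∀ u : ℝ≥0, Measurable (N u) := fun u =>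
    ((hN.stronglyMeasurable u).mono (𝓕.le u)).measurable
  have hSnn : ∀ ω, 0 ≤ aux18S N F m K ω := by
    intro ω
    refine add_nonneg (mul_nonneg (hF0 ω 0) (hNnn ω 0)) (Finset.sum_nonneg fun k _ => ?_)
    refine mul_nonneg (sub_nonneg.2 ?_) (hNnn ω _)
    exact (F ω).mono (by exact_mod_cast aux18pt_mono m (Nat.le_succ k))
  have hintdiff : ∀ (j k : ℕ) (u : ℝ≥0),
      Integrable (fun ω => (F ω ((aux18pt m j : ℝ≥0) : ℝ) - F ω ((aux18pt m k : ℝ≥0) : ℝ)) * N u ω) P := by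
    intro j k u
    refine (hN.integrable u).bdd_mul (c := 1)
      ((hFm (aux18pt m j)).sub (hFm (aux18pt m k))).aestronglyMeasurable
      (Eventually.of_forall fun ω => ?_)
    rw [Real.norm_eq_abs, abs_sub_le_iff]
    constructor <;> nlinarith [hF0 ω ((aux18pt m j : ℝ≥0) : ℝ), hF1 ω ((aux18pt m j : ℝ≥0) : ℝ),
      hF0 ω ((aux18pt m k : ℝ≥0) : ℝ), hF1 ω ((aux18pt m k : ℝ≥0) : ℝ)]
  have hintS : Integrable (aux18S N F m K) P := by
    unfold aux18S
    refine Integrable.add ?_ (integrable_finset_sum _ fun k _ => hintdiff _ _ _)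
    refine (hN.integrable 0).bdd_mul (c := 1) hFm0.aestronglyMeasurable
      (Eventually.of_forall fun ω => ?_)
    rw [Real.norm_eq_abs, abs_of_nonneg (hF0 ω 0)]; exact hF1 ω 0
  have hinttail : Integrable (fun ω => (1 - F ω ((aux18pt m K : ℝ≥0) : ℝ)) * N (aux18pt m K) ω) P := by
    refine (hN.integrable _).bdd_mul (c := 1)
      (measurable_const.sub (hFm (aux18pt m K))).aestronglyMeasurable
      (Eventually.of_forall fun ω => ?_)
    rw [Real.norm_eq_abs, abs_of_nonneg (by linarith [hF1 ω ((aux18pt m K : ℝ≥0) : ℝ)])]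
    linarith [hF0 ω ((aux18pt m K : ℝ≥0) : ℝ)]
  have hle : ∫ ω, aux18S N F m K ω ∂P ≤ 1 := by
    have h1 : ∫ ω, aux18S N F m K ω ∂P
        ≤ ∫ ω, (aux18S N F m K ω + (1 - F ω ((aux18pt m K : ℝ≥0) : ℝ)) * N (aux18pt m K) ω) ∂P := by
      refine integral_mono hintS (hintS.add hinttail) fun ω => ?_
      have : 0 ≤ (1 - F ω ((aux18pt m K : ℝ≥0) : ℝ)) * N (aux18pt m K) ω :=
        mul_nonneg (by linarith [hF1 ω ((aux18pt m K : ℝ≥0) : ℝ)]) (hNnn ω _)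
      linarith
    refine h1.trans ?_
    have := aux18discrete 𝓕 P N F hN hN0 hFneg hF1 hFadapted (aux18pt m)
      (aux18pt_mono m) (aux18pt_zero m) K
    simpa [aux18S, add_assoc] using this
  rw [← ofReal_integral_eq_lintegral_ofReal hintS (Eventually.of_forall hSnn)]
  exact ENNReal.ofReal_le_one.2 hle

include hN hFadapted in
lemma aux18Smeas (m K : ℕ) : Measurable fun ω => ENNReal.ofReal (aux18S N F m K ω) := by
  have hFm := aux18Fmeas 𝓕 F hFadapted
  have hFm0 : Measurable fun ω => F ω (0 : ℝ) := by simpa using hFm 0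
  have hNmeas : ∀ u : ℝ≥0, Measurable (N u) := fun u =>
    ((hN.stronglyMeasurable u).mono (𝓕.le u)).measurable
  refine ENNReal.measurable_ofReal.comp ?_
  unfold aux18S
  exact (hFm0.mul (hNmeas 0)).add (Finset.measurable_sum _ fun k _ =>
    ((hFm _).sub (hFm _)).mul (hNmeas _))

lemma aux18gmeas (m : ℕ) : Measurable fun x : ℝ => aux18g m x := by
  have hmono : Monotone fun x : ℝ => aux18g m x := fun a b hab =>
    Nat.ceil_mono (mul_le_mul_of_nonneg_right hab (by positivity))
  exact hmono.measurable

include hNnn hFneg hF1 in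
lemma aux18key1 (ω : Ω) (m n : ℕ) :
    ∫⁻ x in Set.Icc (0 : ℝ) (n : ℝ), ENNReal.ofReal (N (aux18pt m (aux18g m x)) ω)
      ∂(F ω).measure ≤ ENNReal.ofReal (aux18S N F m (n * 2 ^ m) ω) := by
  have hF0 := aux18F0 F hFneg hF1
  set μ := (F ω).measure with hμ
  set c : ℕ → ℝ≥0∞ := fun j => ENNReal.ofReal (N (aux18pt m j) ω) with hc
  set φ : ℝ → ℝ≥0∞ := fun x => Set.indicator {(0 : ℝ)} (fun _ => c 0) x +
    ∑ k ∈ Finset.range (n * 2 ^ m), Set.indicator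
      (Set.Ioc ((aux18pt m k : ℝ≥0) : ℝ) ((aux18pt m (k + 1) : ℝ≥0) : ℝ)) (fun _ => c (k + 1)) x
    with hφ
  have hstep : ∀ x ∈ Set.Icc (0 : ℝ) (n : ℝ),
      ENNReal.ofReal (N (aux18pt m (aux18g m x)) ω) ≤ φ x := by
    rintro x ⟨hx0, hxn⟩
    rcases eq_or_lt_of_le hx0 with h0 | h0
    · have hg0 : aux18g m x = 0 := by
        simp [aux18g, ← h0]
      simp only [hφ, hg0]
      calc ENNReal.ofReal (N (aux18pt m 0) ω)
          = Set.indicator {(0 : ℝ)} (fun _ => c 0) x := by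
            rw [Set.indicator_of_mem (by simp [← h0]) _]
        _ ≤ _ := le_self_add
    · set j := aux18g m x with hj
      have h2pos : (0 : ℝ) < 2 ^ m := by positivity
      have hj1 : 1 ≤ j := Nat.ceil_pos.2 (by positivity)
      have hjle : j ≤ n * 2 ^ m := by
        refine Nat.ceil_le.2 ?_
        push_cast
        exact mul_le_mul_of_nonneg_right hxn (le_of_lt h2pos)
      obtain ⟨k, hk⟩ : ∃ k, k + 1 = j := ⟨j - 1, Nat.succ_pred_eq_of_pos hj1⟩
      have hkmem : k ∈ Finset.range (n * 2 ^ m) := Finset.mem_range.2 (by omega)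
      have hcoe : ∀ i : ℕ, ((aux18pt m i : ℝ≥0) : ℝ) = (i : ℝ) / 2 ^ m := by
        intro i; simp [aux18pt]
      have hceil_lt : ((j : ℕ) : ℝ) < x * 2 ^ m + 1 := by
        rw [hj]
        simpa [aux18g] using Nat.ceil_lt_add_one (a := x * 2 ^ m) (by positivity)
      have hle_ceil : x * 2 ^ m ≤ ((j : ℕ) : ℝ) := by
        rw [hj]
        simpa [aux18g] using Nat.le_ceil (x * 2 ^ m)
      have hmem : x ∈ Set.Ioc ((aux18pt m k : ℝ≥0) : ℝ) ((aux18pt m (k + 1) : ℝ≥0) : ℝ) := by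
        constructor
        · rw [hcoe, div_lt_iff₀ h2pos]
          have : ((k : ℝ) + 1) < x * 2 ^ m + 1 := by
            calc ((k : ℝ) + 1) = ((j : ℕ) : ℝ) := by rw [← hk]; push_cast; ring
              _ < x * 2 ^ m + 1 := hceil_lt
          linarith
        · rw [hcoe, le_div_iff₀ h2pos]
          calc x * 2 ^ m ≤ ((j : ℕ) : ℝ) := hle_ceil
            _ = (k : ℝ) + 1 := by rw [← hk]; push_cast; ring
            _ ≤ ((k + 1 : ℕ) : ℝ) := by push_cast; exact le_rfl
      calc ENNReal.ofReal (N (aux18pt m j) ω) = c (k + 1) := by rw [hk]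
        _ = Set.indicator (Set.Ioc ((aux18pt m k : ℝ≥0) : ℝ) ((aux18pt m (k + 1) : ℝ≥0) : ℝ))
            (fun _ => c (k + 1)) x := (Set.indicator_of_mem hmem (fun _ => c (k + 1))).symm
        _ ≤ ∑ i ∈ Finset.range (n * 2 ^ m), Set.indicator
            (Set.Ioc ((aux18pt m i : ℝ≥0) : ℝ) ((aux18pt m (i + 1) : ℝ≥0) : ℝ)) (fun _ => c (i + 1)) x :=
          Finset.single_le_sum (f := fun i => Set.indicator
            (Set.Ioc ((aux18pt m i : ℝ≥0) : ℝ) ((aux18pt m (i + 1) : ℝ≥0) : ℝ)) (fun _ => c (i + 1)) x)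
            (fun i _ => zero_le) hkmem
        _ ≤ φ x := by simp only [hφ]; exact le_add_self
  have hllim : Function.leftLim (F ω) 0 = 0 := by
    apply leftLim_eq_of_tendsto (α := ℝ) (β := ℝ)
    have hev : (fun y => F ω y) =ᶠ[𝓝[<] (0 : ℝ)] fun _ => (0 : ℝ) := by
      filter_upwards [self_mem_nhdsWithin] with y hy using hFneg ω y hy
    exact Tendsto.congr' hev.symm tendsto_const_nhds
  calc ∫⁻ x in Set.Icc (0 : ℝ) (n : ℝ), ENNReal.ofReal (N (aux18pt m (aux18g m x)) ω) ∂μ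
      ≤ ∫⁻ x in Set.Icc (0 : ℝ) (n : ℝ), φ x ∂μ :=
        lintegral_mono_ae ((ae_restrict_iff' measurableSet_Icc).2 (Eventually.of_forall hstep))
    _ ≤ ∫⁻ x, φ x ∂μ := setLIntegral_le_lintegral _ _
    _ = c 0 * μ {(0 : ℝ)} + ∑ k ∈ Finset.range (n * 2 ^ m),
        c (k + 1) * μ (Set.Ioc ((aux18pt m k : ℝ≥0) : ℝ) ((aux18pt m (k + 1) : ℝ≥0) : ℝ)) := by
        rw [hφ, lintegral_add_left (measurable_const.indicator (measurableSet_singleton 0)),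
          lintegral_indicator_const (measurableSet_singleton 0),
          lintegral_finset_sum _ (fun k _ => measurable_const.indicator measurableSet_Ioc)]
        congr 1
        exact Finset.sum_congr rfl fun k _ => lintegral_indicator_const measurableSet_Ioc _
    _ = ENNReal.ofReal (aux18S N F m (n * 2 ^ m) ω) := by
        have hμ0 : μ {(0 : ℝ)} = ENNReal.ofReal (F ω 0) := by
          rw [hμ, StieltjesFunction.measure_singleton, hllim, sub_zero]
        rw [hμ0]
        unfold aux18S
        rw [ENNReal.ofReal_add (mul_nonneg (hF0 ω 0) (hNnn ω 0))
          (Finset.sum_nonneg fun k _ => mul_nonneg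
            (sub_nonneg.2 ((F ω).mono (by exact_mod_cast aux18pt_mono m (Nat.le_succ k))))
            (hNnn ω _)),
          ENNReal.ofReal_sum_of_nonneg (fun k _ => mul_nonneg
            (sub_nonneg.2 ((F ω).mono (by exact_mod_cast aux18pt_mono m (Nat.le_succ k))))
            (hNnn ω _))]
        congr 1
        · rw [ENNReal.ofReal_mul (hF0 ω 0), hc]
          simp only [aux18pt_zero]
          exact mul_comm _ _
        · refine Finset.sum_congr rfl fun k _ => ?_
          rw [hμ, StieltjesFunction.measure_Ioc,
            ENNReal.ofReal_mul (sub_nonneg.2 ((F ω).mono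
              (by exact_mod_cast aux18pt_mono m (Nat.le_succ k))))]
          exact mul_comm _ _

lemma aux18conv (ω : Ω) (hrc : ∀ t : ℝ≥0, ContinuousWithinAt (fun s => N s ω) (Set.Ici t) t)
    (x : ℝ) :
    Tendsto (fun m : ℕ => ENNReal.ofReal (N (aux18pt m (aux18g m x)) ω)) atTop
      (𝓝 (ENNReal.ofReal (N x.toNNReal ω))) := by
  set t := x.toNNReal with ht
  have h2pos : ∀ m : ℕ, (0 : ℝ) < 2 ^ m := fun m => by positivity
  have hcoe : ∀ m i : ℕ, ((aux18pt m i : ℝ≥0) : ℝ) = (i : ℝ) / 2 ^ m := by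
    intro m i; simp [aux18pt]
  have h1 : ∀ m : ℕ, (t : ℝ) ≤ ((aux18pt m (aux18g m x) : ℝ≥0) : ℝ) := by
    intro m
    rw [hcoe]
    rcases le_or_gt x 0 with hx | hx
    · rw [ht, Real.toNNReal_of_nonpos hx]
      positivity
    · rw [ht, Real.coe_toNNReal x hx.le, le_div_iff₀ (h2pos m)]
      simpa [aux18g] using Nat.le_ceil (x * 2 ^ m)
  have h2 : ∀ m : ℕ, ((aux18pt m (aux18g m x) : ℝ≥0) : ℝ) ≤ (t : ℝ) + ((2 : ℝ) ^ m)⁻¹ := by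
    intro m
    rw [hcoe]
    rcases le_or_gt x 0 with hx | hx
    · have : aux18g m x = 0 := by
        simp only [aux18g]
        exact Nat.ceil_eq_zero.2 (mul_nonpos_of_nonpos_of_nonneg hx (h2pos m).le)
      rw [this]
      simp only [Nat.cast_zero, zero_div]
      positivity
    · have hceil : ((aux18g m x : ℕ) : ℝ) < x * 2 ^ m + 1 := by
        simpa [aux18g] using Nat.ceil_lt_add_one (a := x * 2 ^ m) (by positivity)
      rw [div_le_iff₀ (h2pos m), ht, Real.coe_toNNReal x hx.le]
      have hinv : ((2 : ℝ) ^ m)⁻¹ * 2 ^ m = 1 := inv_mul_cancel₀ (h2pos m).ne'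
      nlinarith [hceil]
  have htendR : Tendsto (fun m : ℕ => ((aux18pt m (aux18g m x) : ℝ≥0) : ℝ)) atTop (𝓝 (t : ℝ)) := by
    have hub : Tendsto (fun m : ℕ => (t : ℝ) + ((2 : ℝ) ^ m)⁻¹) atTop (𝓝 ((t : ℝ) + 0)) :=
      tendsto_const_nhds.add
        (tendsto_inv_atTop_zero.comp (tendsto_pow_atTop_atTop_of_one_lt one_lt_two))
    rw [add_zero] at hub
    exact tendsto_of_tendsto_of_tendsto_of_le_of_le tendsto_const_nhds hub h1 h2
  have htendW : Tendsto (fun m : ℕ => aux18pt m (aux18g m x)) atTop (𝓝[Set.Ici t] t) := by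
    rw [tendsto_nhdsWithin_iff]
    exact ⟨NNReal.tendsto_coe.1 htendR,
      Eventually.of_forall fun m => by
        simp only [Set.mem_Ici]
        exact_mod_cast h1 m⟩
  exact (ENNReal.continuous_ofReal.tendsto _).comp ((hrc t).tendsto.comp htendW)

lemma aux18fmmeas (ω : Ω) (m : ℕ) :
    Measurable fun x : ℝ => ENNReal.ofReal (N (aux18pt m (aux18g m x)) ω) :=
  (measurable_from_top (f := fun j : ℕ => ENNReal.ofReal (N (aux18pt m j) ω))).comp
    (aux18gmeas m)

lemma aux18hmeas (ω : Ω) (hrc : ∀ t : ℝ≥0, ContinuousWithinAt (fun s => N s ω) (Set.Ici t) t) :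
    Measurable fun x : ℝ => ENNReal.ofReal (N x.toNNReal ω) := by
  have : (fun x : ℝ => ENNReal.ofReal (N x.toNNReal ω)) = fun x =>
      liminf (fun m : ℕ => ENNReal.ofReal (N (aux18pt m (aux18g m x)) ω)) atTop :=
    funext fun x => ((aux18conv N ω hrc x).liminf_eq).symm
  rw [this]
  exact Measurable.liminf fun m => aux18fmmeas N ω m

include hNnn hFneg hF1 in
lemma aux18keyn (ω : Ω) (hrc : ∀ t : ℝ≥0, ContinuousWithinAt (fun s => N s ω) (Set.Ici t) t)
    (n : ℕ) :
    ∫⁻ x in Set.Icc (0 : ℝ) (n : ℝ), ENNReal.ofReal (N x.toNNReal ω) ∂(F ω).measure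
      ≤ liminf (fun m : ℕ => ENNReal.ofReal (aux18S N F m (n * 2 ^ m) ω)) atTop := by
  have heq : ∫⁻ x in Set.Icc (0 : ℝ) (n : ℝ), ENNReal.ofReal (N x.toNNReal ω) ∂(F ω).measure
      = ∫⁻ x in Set.Icc (0 : ℝ) (n : ℝ),
          liminf (fun m : ℕ => ENNReal.ofReal (N (aux18pt m (aux18g m x)) ω)) atTop
          ∂(F ω).measure :=
    lintegral_congr fun x => ((aux18conv N ω hrc x).liminf_eq).symm
  rw [heq]
  refine le_trans (lintegral_liminf_le fun m => aux18fmmeas N ω m) ?_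
  exact liminf_le_liminf (Eventually.of_forall fun m =>
    aux18key1 N F hNnn hFneg hF1 ω m n)
end
lemma aux18Smono {Ω : Type*} (N : ℝ≥0 → Ω → ℝ) (F : Ω → StieltjesFunction ℝ)
    (hNnn : ∀ ω t, 0 ≤ N t ω) (m : ℕ) {a b : ℕ} (hab : a ≤ b) (ω : Ω) :
    ENNReal.ofReal (aux18S N F m (a * 2 ^ m) ω) ≤ ENNReal.ofReal (aux18S N F m (b * 2 ^ m) ω) := by
  refine ENNReal.ofReal_le_ofReal ?_
  unfold aux18S
  refine add_le_add_right ?_ _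
  refine Finset.sum_le_sum_of_subset_of_nonneg
    (Finset.range_subset_range.2 (Nat.mul_le_mul_right _ hab)) fun k _ _ => ?_
  exact mul_nonneg (sub_nonneg.2 ((F ω).mono
    (by exact_mod_cast aux18pt_mono m (Nat.le_succ k)))) (hNnn ω _)

/-- Optimality of proportional consumption via a supermartingale bound: let `N` be a
nonnegative càdlàg supermartingale with `N 0 = 1`, and let `F ω` be a (pathwise)
right-continuous nondecreasing process with `F = 0` on `(-∞, 0)` (i.e. `F_{0-} = 0`),
`F ≤ 1`, adapted. Then `E[∫_{[0,τ]} N dF] ≤ 1` for every finite stopping time `τ` with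
`E[sup_{t ≤ τ} N t] < ∞`, and consequently `E[∫_{[0,∞)} N dF] ≤ 1`. -/
theorem stmt18 {Ω : Type*} {m : MeasurableSpace Ω} (𝓕 : Filtration ℝ≥0 m)
    (P : Measure Ω) [IsProbabilityMeasure P]
    (N : ℝ≥0 → Ω → ℝ)
    (hN : Supermartingale N 𝓕 P)
    (hNnn : ∀ ω t, 0 ≤ N t ω)
    (hN0 : ∀ᵐ ω ∂P, N 0 ω = 1)
    -- right-continuity of paths of N
    (hrc : ∀ ω t, ContinuousWithinAt (fun s => N s ω) (Set.Ici t) t)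
    -- existence of left limits of paths of N
    (hll : ∀ ω (t : ℝ≥0), 0 < t → ∃ l : ℝ, Tendsto (fun s => N s ω) (𝓝[<] t) (𝓝 l))
    -- the cumulative consumption F, as a pathwise Stieltjes function
    (F : Ω → StieltjesFunction ℝ)
    (hFneg : ∀ ω, ∀ x : ℝ, x < 0 → F ω x = 0)
    (hF1 : ∀ ω x, F ω x ≤ 1)
    (hFadapted : ∀ t : ℝ≥0, Measurable[𝓕 t] fun ω => F ω (t : ℝ)) :
    (∀ τ : Ω → ℝ≥0, IsStoppingTime 𝓕 (fun ω => (τ ω : WithTop ℝ≥0)) →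
      (∫⁻ ω, ⨆ s : Set.Iic (τ ω), ENNReal.ofReal (N s ω) ∂P) < ⊤ →
      ∫⁻ ω, (∫⁻ x in Set.Icc (0 : ℝ) ((τ ω : ℝ)),
        ENNReal.ofReal (N x.toNNReal ω) ∂(F ω).measure) ∂P ≤ 1) ∧
    ∫⁻ ω, (∫⁻ x in Set.Ici (0 : ℝ),
      ENNReal.ofReal (N x.toNNReal ω) ∂(F ω).measure) ∂P ≤ 1 := by
  have part2 : ∫⁻ ω, (∫⁻ x in Set.Ici (0 : ℝ),
      ENNReal.ofReal (N x.toNNReal ω) ∂(F ω).measure) ∂P ≤ 1 := by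
    have hsup : ∀ ω, (∫⁻ x in Set.Ici (0 : ℝ),
        ENNReal.ofReal (N x.toNNReal ω) ∂(F ω).measure)
        = ⨆ n : ℕ, ∫⁻ x in Set.Icc (0 : ℝ) (n : ℝ),
            ENNReal.ofReal (N x.toNNReal ω) ∂(F ω).measure := by
      intro ω
      have hme := aux18hmeas N ω (hrc ω)
      set f : ℝ → ℝ≥0∞ := fun x => ENNReal.ofReal (N x.toNNReal ω) with hf
      have hind : ∀ x : ℝ, (Set.Ici (0 : ℝ)).indicator f x
          = ⨆ n : ℕ, (Set.Icc (0 : ℝ) (n : ℝ)).indicator f x := by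
        intro x
        rcases lt_or_ge x 0 with hx | hx
        · have h1 : (Set.Ici (0 : ℝ)).indicator f x = 0 :=
            Set.indicator_of_notMem (by simpa using not_le.2 hx) _
          have h2 : ∀ n : ℕ, (Set.Icc (0 : ℝ) (n : ℝ)).indicator f x = 0 := fun n =>
            Set.indicator_of_notMem (fun hc => absurd hc.1 (not_le.2 hx)) _
          simp [h1, h2]
        · rw [Set.indicator_of_mem (Set.mem_Ici.2 hx)]
          apply le_antisymm
          · obtain ⟨n, hn⟩ := exists_nat_ge x
            refine le_iSup_of_le n ?_
            rw [Set.indicator_of_mem (Set.mem_Icc.2 ⟨hx, hn⟩)]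
          · exact iSup_le fun n => Set.indicator_le_self _ _ x
      calc ∫⁻ x in Set.Ici (0 : ℝ), f x ∂(F ω).measure
          = ∫⁻ x, (Set.Ici (0 : ℝ)).indicator f x ∂(F ω).measure :=
            (lintegral_indicator measurableSet_Ici f).symm
        _ = ∫⁻ x, ⨆ n : ℕ, (Set.Icc (0 : ℝ) (n : ℝ)).indicator f x ∂(F ω).measure :=
            lintegral_congr hind
        _ = ⨆ n : ℕ, ∫⁻ x, (Set.Icc (0 : ℝ) (n : ℝ)).indicator f x ∂(F ω).measure := by
            refine lintegral_iSup (fun n => hme.indicator measurableSet_Icc) ?_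
            intro a b hab x
            refine Set.indicator_le_indicator_of_subset
              (Set.Icc_subset_Icc_right (by exact_mod_cast hab)) (fun _ => zero_le) x
        _ = ⨆ n : ℕ, ∫⁻ x in Set.Icc (0 : ℝ) (n : ℝ), f x ∂(F ω).measure := by
            exact iSup_congr fun n => lintegral_indicator measurableSet_Icc f
    calc ∫⁻ ω, (∫⁻ x in Set.Ici (0 : ℝ),
          ENNReal.ofReal (N x.toNNReal ω) ∂(F ω).measure) ∂P
        = ∫⁻ ω, ⨆ n : ℕ, ∫⁻ x in Set.Icc (0 : ℝ) (n : ℝ),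
            ENNReal.ofReal (N x.toNNReal ω) ∂(F ω).measure ∂P := lintegral_congr hsup
      _ ≤ ∫⁻ ω, ⨆ n : ℕ,
            liminf (fun m : ℕ => ENNReal.ofReal (aux18S N F m (n * 2 ^ m) ω)) atTop ∂P := by
          refine lintegral_mono fun ω => iSup_mono fun n => ?_
          exact aux18keyn N F hNnn hFneg hF1 ω (hrc ω) n
      _ = ⨆ n : ℕ, ∫⁻ ω,
            liminf (fun m : ℕ => ENNReal.ofReal (aux18S N F m (n * 2 ^ m) ω)) atTop ∂P := by
          refine lintegral_iSup (fun n => ?_) (fun a b hab ω => ?_)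
          · exact .liminf fun m => aux18Smeas 𝓕 P N F hN hFadapted m (n * 2 ^ m)
          · exact liminf_le_liminf (Eventually.of_forall fun m =>
              aux18Smono N F hNnn m hab ω)
      _ ≤ 1 := by
          refine iSup_le fun n => ?_
          refine le_trans (lintegral_liminf_le fun m =>
            aux18Smeas 𝓕 P N F hN hFadapted m (n * 2 ^ m)) ?_
          refine le_trans (liminf_le_liminf (Eventually.of_forall fun m =>
            aux18Sbound 𝓕 P N F hN hNnn hN0 hFneg hF1 hFadapted m (n * 2 ^ m))) ?_
          simp [liminf_const]
  refine ⟨fun τ _ _ => ?_, part2⟩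
  refine le_trans (lintegral_mono fun ω => ?_) part2
  exact lintegral_mono_set fun x hx => hx.1
end
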